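/- Let S : ℝ → (0,∞) be continuous, let S* > 0 and d₁ > 0, let g(x) := x − 1 − ln x for x > 0, and define W₂(ξ) := ∫₀¹ g(S(ξ−θ)/S*) dθ − ∫_{−1}⁰ g(S(ξ−θ)/S*) dθ. Then W₂ is differentiable on ℝ with W₂'(ξ) = 2g(S(ξ)/S*) − g(S(ξ−1)/S*) − g(S(ξ+1)/S*); moreover, for every ξ ∈ ℝ, (1 − S*/S(ξ))·d₁·(S(ξ+1) + S(ξ−1) − 2S(ξ)) + d₁·S*·W₂'(ξ) = −d₁·S*·(g(S(ξ−1)/S(ξ)) + g(S(ξ+1)/S(ξ))). -/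

import Mathlib

open Real MeasureTheory

/-- **Derivative of the shift part of the Lyapunov functional** (identity used in
Step 4 of the proof of Theorem 3.1).  For continuous positive `S`, `S* > 0`,
`d₁ > 0` and `g(x) = x − 1 − ln x`, the functional
`W₂(ξ) = ∫₀¹ g(S(ξ−θ)/S*) dθ − ∫_{−1}⁰ g(S(ξ−θ)/S*) dθ` is differentiable with
`W₂'(ξ) = 2g(S(ξ)/S*) − g(S(ξ−1)/S*) − g(S(ξ+1)/S*)`, and
`(1 − S*/S(ξ))d₁(S(ξ+1) + S(ξ−1) − 2S(ξ)) + d₁S*W₂'(ξ)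
  = −d₁S*(g(S(ξ−1)/S(ξ)) + g(S(ξ+1)/S(ξ)))`. -/
theorem lyapunov_shift_derivative
    (S : ℝ → ℝ) (hScont : Continuous S) (hSpos : ∀ ξ : ℝ, 0 < S ξ)
    (Sstar : ℝ) (hSstar : 0 < Sstar) (d₁ : ℝ) (hd₁ : 0 < d₁)
    (g : ℝ → ℝ) (hg : ∀ x : ℝ, g x = x - 1 - Real.log x)
    (W₂ : ℝ → ℝ)
    (hW₂ : ∀ ξ : ℝ, W₂ ξ = (∫ θ in (0:ℝ)..1, g (S (ξ - θ) / Sstar))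
        - ∫ θ in (-1:ℝ)..0, g (S (ξ - θ) / Sstar)) :
    ∀ ξ : ℝ,
      HasDerivAt W₂
        (2 * g (S ξ / Sstar) - g (S (ξ - 1) / Sstar) - g (S (ξ + 1) / Sstar)) ξ ∧
      (1 - Sstar / S ξ) * (d₁ * (S (ξ + 1) + S (ξ - 1) - 2 * S ξ))
          + d₁ * Sstar *
            (2 * g (S ξ / Sstar) - g (S (ξ - 1) / Sstar) - g (S (ξ + 1) / Sstar))
        = -(d₁ * Sstar) * (g (S (ξ - 1) / S ξ) + g (S (ξ + 1) / S ξ)) := by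
  intro ξ
  -- the integrand as a function of the space variable
  set f : ℝ → ℝ := fun u => g (S u / Sstar) with hf
  have hfcont : Continuous f := by
    have : Continuous fun u => S u / Sstar - 1 - Real.log (S u / Sstar) := by
      fun_prop (disch := intro x; exact (div_pos (hSpos x) hSstar).ne')
    simpa only [hf, funext hg] using this
  -- antiderivative
  set F : ℝ → ℝ := fun x => ∫ t in (0:ℝ)..x, f t with hF
  have hFd : ∀ x : ℝ, HasDerivAt F (f x) x := fun x =>
    (hfcont.integral_hasStrictDerivAt 0 x).hasDerivAt
  -- rewrite W₂ in terms of F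
  have hW₂' : W₂ = fun ξ => (F ξ - F (ξ - 1)) - (F (ξ + 1) - F ξ) := by
    funext x
    rw [hW₂ x]
    have h1 : (∫ θ in (0:ℝ)..1, f (x - θ)) = ∫ u in (x - 1)..x, f u := by
      simpa using intervalIntegral.integral_comp_sub_left f x (a := (0:ℝ)) (b := 1)
    have h2 : (∫ θ in (-1:ℝ)..0, f (x - θ)) = ∫ u in x..(x + 1), f u := by
      have := intervalIntegral.integral_comp_sub_left f x (a := (-1:ℝ)) (b := 0)
      simpa [sub_neg_eq_add] using this
    have hint : ∀ a b : ℝ, IntervalIntegrable f volume a b := fun a b =>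
      hfcont.intervalIntegrable a b
    have h3 : F x - F (x - 1) = ∫ u in (x - 1)..x, f u :=
      intervalIntegral.integral_interval_sub_left (hint 0 x) (hint 0 (x - 1))
    have h4 : F (x + 1) - F x = ∫ u in x..(x + 1), f u :=
      intervalIntegral.integral_interval_sub_left (hint 0 (x + 1)) (hint 0 x)
    rw [h1, h2, ← h3, ← h4]
  have hderiv : HasDerivAt W₂ (2 * f ξ - f (ξ - 1) - f (ξ + 1)) ξ := by
    rw [hW₂']
    have hm : HasDerivAt (fun x : ℝ => x - 1) 1 ξ := by
      simpa using (hasDerivAt_id ξ).sub_const 1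
    have hp : HasDerivAt (fun x : ℝ => x + 1) 1 ξ := by
      simpa using (hasDerivAt_id ξ).add_const 1
    have h1 : HasDerivAt (fun x => F (x - 1)) (f (ξ - 1)) ξ := by
      simpa [Function.comp_def] using (hFd (ξ - 1)).comp ξ hm
    have h2 : HasDerivAt (fun x => F (x + 1)) (f (ξ + 1)) ξ := by
      simpa [Function.comp_def] using (hFd (ξ + 1)).comp ξ hp
    have := ((hFd ξ).sub h1).sub (h2.sub (hFd ξ))
    exact this.congr_deriv (by ring)
  refine ⟨hderiv, ?_⟩
  have hSne : S ξ ≠ 0 := (hSpos ξ).ne'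
  have hSne' : S (ξ - 1) ≠ 0 := (hSpos (ξ - 1)).ne'
  have hSne'' : S (ξ + 1) ≠ 0 := (hSpos (ξ + 1)).ne'
  have hSsne : Sstar ≠ 0 := hSstar.ne'
  simp only [hg, Real.log_div hSne hSsne, Real.log_div hSne' hSsne,
    Real.log_div hSne'' hSsne, Real.log_div hSne' hSne, Real.log_div hSne'' hSne]
  field_simp
  ring
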